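/- Let c, s, L, E, I, A, A*, G > 0 be reals, let a, u, v be reals with 1 < a < 16, 1 < u < 4, 1 < v < 4, and let x₀ ∈ [0,1). Then as P → ∞ the horizontal displacements H(P,x₀) converge to 2·c·s·L·( 10·L²/(3·E·I·(16 − a)) − (20·L²/(3·E·I·a))·C_{a/16}(x₀) + (2/(E·A·u))·C_{u/4}(x₀) − 1/(E·A·(4 − u)) + 1/(G·A*·(4 − v)) − (2/(G·A*·v))·C_{v/4}(x₀) ), where C_t(x₀) = Σ_{k=1}^∞ ρ_k(x₀) t^k; that is, the horizontal displacements of the end nodes of the infinite binary tree are a linear combination of inverses of β-Cantor functions. -/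

import Mathlib

open Filter

/-- The `k`-th binary digit of `x ∈ [0,1)`: ρ_k(x) = ⌊2^k x⌋ − 2⌊2^{k−1} x⌋. -/
noncomputable def binDigit (k : ℕ) (x : ℝ) : ℤ := ⌊(2:ℝ) ^ k * x⌋ - 2 * ⌊(2:ℝ) ^ (k - 1) * x⌋

/-- The series C_t(x) = Σ_{k=1}^∞ ρ_k(x) t^k: the (rescaled) inverse β-Cantor function. -/
noncomputable def Cinf (t x : ℝ) : ℝ := ∑' k : ℕ, (binDigit (k + 1) x : ℝ) * t ^ (k + 1)

/-- Horizontal displacement per unit load of the end node located at `x₀` in a binary tree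
structure with `P` levels, from the Principle of Virtual Work (bending + axial + shear). -/
noncomputable def Hdisp (c s L E I A A' G a u v x₀ : ℝ) (P : ℕ) : ℝ :=
  (∑ i ∈ Finset.Icc 1 P, (a ^ (i - 1) / (E * I)) *
      ∫ x in (0:ℝ)..(L * 2 ^ ((1:ℤ) - (i:ℤ))),
        (s * L * (2 ^ ((2:ℤ) - (i:ℤ)) - 2 ^ ((1:ℤ) - (P:ℤ))) - s * x) *
          (1 - 2 * (binDigit i x₀ : ℝ)) *
          (c * 2 ^ (-(i:ℤ)) * (L * 2 ^ ((1:ℤ) - (i:ℤ)) - x))) +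
  (∑ i ∈ Finset.Icc 1 P,
      c * s * (2 * (binDigit i x₀ : ℝ) - 1) * 2 ^ (-(i:ℤ)) * L * 2 ^ ((1:ℤ) - (i:ℤ)) *
        u ^ (i - 1) / (E * A)) +
  (∑ i ∈ Finset.Icc 1 P,
      c * s * (1 - 2 * (binDigit i x₀ : ℝ)) * 2 ^ (-(i:ℤ)) * L * 2 ^ ((1:ℤ) - (i:ℤ)) *
        v ^ (i - 1) / (G * A'))

lemma binDigit_mem (k : ℕ) (x : ℝ) : binDigit (k+1) x = 0 ∨ binDigit (k+1) x = 1 := by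
  unfold binDigit
  have h : (2:ℝ)^(k+1) * x = 2 * ((2:ℝ)^(k+1-1) * x) := by
    simp only [Nat.add_sub_cancel]; ring
  rw [h]
  set y := (2:ℝ)^(k+1-1) * x
  have h1 : (2:ℤ) * ⌊y⌋ ≤ ⌊2*y⌋ := by
    rw [Int.le_floor]; push_cast; linarith [Int.floor_le y]
  have h2 : ⌊2*y⌋ < 2*⌊y⌋ + 2 := by
    rw [Int.floor_lt]; push_cast; linarith [Int.lt_floor_add_one y]
  omega

lemma cubic_deriv (K1 K2 K3 x : ℝ) :
    HasDerivAt (fun y => K1*y + K2*y^2 + K3*y^3) (K1 + 2*K2*x + 3*K3*x^2) x := by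
  have h1 := (hasDerivAt_id x).const_mul K1
  have h2 := (hasDerivAt_pow 2 x).const_mul K2
  have h3 := (hasDerivAt_pow 3 x).const_mul K3
  refine ((h1.add h2).add h3).congr_deriv ?_
  rw [show (2:ℕ) - 1 = 1 from rfl, show (3:ℕ) - 1 = 2 from rfl]
  push_cast; ring

lemma integ (A s B c2 ℓ : ℝ) :
    (∫ x in (0:ℝ)..ℓ, (A - s*x) * B * (c2 * (ℓ - x))) = B * c2 * (A*ℓ^2/2 - s*ℓ^3/6) := by
  have key : ∀ x ∈ Set.uIcc (0:ℝ) ℓ,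
      HasDerivAt (fun y => (B*c2*(A*ℓ))*y + (-(B*c2*(A+s*ℓ))/2)*y^2 + (B*c2*s/3)*y^3)
        ((A - s*x) * B * (c2 * (ℓ - x))) x := by
    intro x _
    have := cubic_deriv (B*c2*(A*ℓ)) (-(B*c2*(A+s*ℓ))/2) (B*c2*s/3) x
    convert this using 1
    ring
  rw [intervalIntegral.integral_eq_sub_of_hasDerivAt key
    ((Continuous.intervalIntegrable (by fun_prop) _ _))]
  ring

noncomputable def Sfun (x₀ t : ℝ) (P : ℕ) : ℝ :=
  ∑ i ∈ Finset.Icc 1 P, (1 - 2*(binDigit i x₀ : ℝ)) * t ^ i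

lemma Sfun_eq_range (x₀ t : ℝ) (P : ℕ) :
    Sfun x₀ t P = ∑ k ∈ Finset.range P, (1 - 2*(binDigit (k+1) x₀ : ℝ)) * t ^ (k+1) := by
  rw [Sfun, ← Finset.Ico_add_one_right_eq_Icc, Finset.sum_Ico_eq_sum_range]
  exact Finset.sum_congr (by norm_num) fun k _ => by rw [add_comm]

lemma summable_rho (x₀ t : ℝ) (ht0 : 0 ≤ t) (ht1 : t < 1) :
    Summable (fun k:ℕ => (binDigit (k+1) x₀ : ℝ) * t ^ (k+1)) := by
  apply Summable.of_norm_bounded (g := fun k => t^(k+1))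
  · simpa only [← pow_succ'] using (summable_geometric_of_lt_one ht0 ht1).mul_left t
  · intro k
    rw [norm_mul, Real.norm_eq_abs (t^(k+1)), abs_of_nonneg (pow_nonneg ht0 _)]
    have hb : ‖((binDigit (k+1) x₀ : ℤ) : ℝ)‖ ≤ 1 := by
      rcases binDigit_mem k x₀ with h | h <;> rw [h] <;> norm_num
    exact mul_le_of_le_one_left (pow_nonneg ht0 _) hb

lemma summable_geom1 (t : ℝ) (ht0 : 0 ≤ t) (ht1 : t < 1) :
    Summable (fun k:ℕ => t^(k+1)) := by
  simpa only [← pow_succ'] using (summable_geometric_of_lt_one ht0 ht1).mul_left t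

lemma Sfun_tendsto (x₀ t : ℝ) (ht0 : 0 ≤ t) (ht1 : t < 1) :
    Tendsto (Sfun x₀ t) atTop (nhds (t/(1-t) - 2 * Cinf t x₀)) := by
  have hs1 := summable_geom1 t ht0 ht1
  have hs2 := summable_rho x₀ t ht0 ht1
  have hsum : Summable (fun k:ℕ => (1 - 2*(binDigit (k+1) x₀:ℝ)) * t^(k+1)) := by
    have h := hs1.sub (hs2.mul_left 2)
    refine h.congr fun k => ?_
    ring
  have htsum : ∑' k:ℕ, (1 - 2*(binDigit (k+1) x₀:ℝ)) * t^(k+1) = t/(1-t) - 2 * Cinf t x₀ := by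
    have h1 : ∑' k:ℕ, t^(k+1) = t/(1-t) := by
      rw [show (fun k:ℕ => t^(k+1)) = fun k:ℕ => t * t^k from funext fun k => pow_succ' t k]
      rw [tsum_mul_left, tsum_geometric_of_lt_one ht0 ht1, div_eq_mul_inv]
    calc ∑' k:ℕ, (1 - 2*(binDigit (k+1) x₀:ℝ)) * t^(k+1)
        = ∑' k:ℕ, (t^(k+1) - 2*((binDigit (k+1) x₀:ℝ)*t^(k+1))) := by
          congr 1; funext k; ring
      _ = (∑' k:ℕ, t^(k+1)) - ∑' k:ℕ, 2*((binDigit (k+1) x₀:ℝ)*t^(k+1)) :=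
          Summable.tsum_sub hs1 (hs2.mul_left 2)
      _ = t/(1-t) - 2 * Cinf t x₀ := by rw [h1, tsum_mul_left]; rfl
  have h := hsum.hasSum.tendsto_sum_nat
  rw [htsum] at h
  exact h.congr fun P => (Sfun_eq_range x₀ t P).symm

lemma zero_tendsto (x₀ r : ℝ) (hr0 : 0 ≤ r) (hr2 : r < 2) :
    Tendsto (fun P : ℕ => ((2:ℝ)^P)⁻¹ * Sfun x₀ r P) atTop (nhds 0) := by
  set M := max 1 r with hM
  have hM1 : (1:ℝ) ≤ M := le_max_left _ _
  have hM2 : M / 2 < 1 := by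
    have : M < 2 := max_lt one_lt_two hr2
    linarith
  have hM0 : 0 ≤ M / 2 := by positivity
  have hbound : ∀ P : ℕ, ‖((2:ℝ)^P)⁻¹ * Sfun x₀ r P‖ ≤ (P:ℝ) * (M/2)^P := by
    intro P
    have h1 : ‖Sfun x₀ r P‖ ≤ (P:ℝ) * M^P := by
      rw [Sfun]
      calc ‖∑ i ∈ Finset.Icc 1 P, (1 - 2*(binDigit i x₀ : ℝ)) * r ^ i‖
          ≤ ∑ i ∈ Finset.Icc 1 P, ‖(1 - 2*(binDigit i x₀ : ℝ)) * r ^ i‖ :=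
            norm_sum_le _ _
        _ ≤ ∑ i ∈ Finset.Icc 1 P, M^P := by
            apply Finset.sum_le_sum
            intro i hi
            obtain ⟨hi1, hi2⟩ := Finset.mem_Icc.mp hi
            obtain ⟨j, rfl⟩ : ∃ j, i = j + 1 := ⟨i - 1, (Nat.succ_pred_eq_of_pos hi1).symm⟩
            rw [norm_mul]
            have hb : ‖(1 - 2*(binDigit (j+1) x₀ : ℝ))‖ ≤ 1 := by
              rcases binDigit_mem j x₀ with h | h <;> rw [h] <;> norm_num
            have hrM : ‖r ^ (j+1)‖ ≤ M^P := by
              rw [Real.norm_eq_abs, abs_of_nonneg (pow_nonneg hr0 _)]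
              calc r^(j+1) ≤ M^(j+1) := pow_le_pow_left₀ hr0 (le_max_right 1 r) _
                _ ≤ M^P := pow_le_pow_right₀ hM1 hi2
            calc ‖(1 - 2*(binDigit (j+1) x₀ : ℝ))‖ * ‖r ^ (j+1)‖
                ≤ 1 * (M^P) := mul_le_mul hb hrM (norm_nonneg _) zero_le_one
              _ = M^P := one_mul _
        _ = (P:ℝ) * M^P := by
            rw [Finset.sum_const, Nat.card_Icc]
            simp [nsmul_eq_mul]
    rw [norm_mul]
    have h3 : ‖((2:ℝ)^P)⁻¹‖ = ((2:ℝ)^P)⁻¹ := by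
      rw [Real.norm_eq_abs, abs_of_nonneg]; positivity
    rw [h3]
    calc ((2:ℝ)^P)⁻¹ * ‖Sfun x₀ r P‖ ≤ ((2:ℝ)^P)⁻¹ * ((P:ℝ) * M^P) := by
          apply mul_le_mul_of_nonneg_left h1; positivity
      _ = (P:ℝ) * (M/2)^P := by rw [div_pow]; field_simp
  have hg : Tendsto (fun P : ℕ => (P:ℝ) * (M/2)^P) atTop (nhds 0) := by
    simpa using tendsto_pow_const_mul_const_pow_of_lt_one 1 hM0 hM2
  exact squeeze_zero_norm hbound hg

lemma closed (c s L E I A A' G a u v x₀ : ℝ)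
    (hE : E ≠ 0) (hI : I ≠ 0) (hA : A ≠ 0) (hA' : A' ≠ 0) (hG : G ≠ 0)
    (ha : a ≠ 0) (hu : u ≠ 0) (hv : v ≠ 0) (P : ℕ) :
    Hdisp c s L E I A A' G a u v x₀ P =
      (20*c*s*L^3/(3*E*I*a)) * Sfun x₀ (a/16) P
      - (4*c*s*L^3/(E*I*a)) * (((2:ℝ)^P)⁻¹ * Sfun x₀ (a/8) P)
      - (2*c*s*L/(E*A*u)) * Sfun x₀ (u/4) P
      + (2*c*s*L/(G*A'*v)) * Sfun x₀ (v/4) P := by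
  unfold Hdisp Sfun
  simp only [Finset.mul_sum]
  rw [← Finset.sum_add_distrib, ← Finset.sum_add_distrib,
      ← Finset.sum_sub_distrib, ← Finset.sum_sub_distrib, ← Finset.sum_add_distrib]
  refine Finset.sum_congr rfl fun i hi => ?_
  obtain ⟨hi1, hi2⟩ := Finset.mem_Icc.mp hi
  obtain ⟨j, rfl⟩ : ∃ j, i = j + 1 := ⟨i - 1, (Nat.succ_pred_eq_of_pos hi1).symm⟩
  rw [integ]
  have h2 : (2:ℝ) ≠ 0 := two_ne_zero
  have e1 : (2:ℝ)^(-((j+1:ℕ):ℤ)) = ((2:ℝ)^(j+1))⁻¹ := by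
    rw [zpow_neg, zpow_natCast]
  have e2 : (2:ℝ)^((1:ℤ) - ((j+1:ℕ):ℤ)) = 2 / 2^(j+1) := by
    rw [zpow_sub₀ h2, zpow_one, zpow_natCast]
  have e3 : (2:ℝ)^((2:ℤ) - ((j+1:ℕ):ℤ)) = 4 / 2^(j+1) := by
    rw [zpow_sub₀ h2, zpow_natCast]; norm_num
  have e4 : (2:ℝ)^((1:ℤ) - (P:ℤ)) = 2 / 2^P := by
    rw [zpow_sub₀ h2, zpow_one, zpow_natCast]
  rw [e1, e2, e3, e4]
  have h16 : (16:ℝ)^(j+1) = ((2:ℝ)^(j+1))^4 := by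
    rw [← pow_mul, mul_comm, pow_mul]; norm_num
  have h8 : (8:ℝ)^(j+1) = ((2:ℝ)^(j+1))^3 := by
    rw [← pow_mul, mul_comm, pow_mul]; norm_num
  have h4 : (4:ℝ)^(j+1) = ((2:ℝ)^(j+1))^2 := by
    rw [← pow_mul, mul_comm, pow_mul]; norm_num
  rw [div_pow a (16:ℝ), div_pow a (8:ℝ), div_pow u, div_pow v, h16, h8, h4]
  simp only [Nat.add_sub_cancel]
  have hq : ((2:ℝ)^(j+1)) ≠ 0 := pow_ne_zero _ h2
  have hw : ((2:ℝ)^P) ≠ 0 := pow_ne_zero _ h2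
  rw [pow_succ a j, pow_succ u j, pow_succ v j]
  field_simp
  ring

/-- For `1 < a < 16`, `1 < u < 4`, `1 < v < 4`, the horizontal displacements of the end
nodes converge, as the number of levels tends to infinity, to a linear combination of
inverses of β-Cantor functions. -/
theorem horizontal_displacement_infinite (c s L E I A A' G a u v : ℝ)
    (hc : 0 < c) (hs : 0 < s) (hL : 0 < L) (hE : 0 < E) (hI : 0 < I)
    (hA : 0 < A) (hA' : 0 < A') (hG : 0 < G)
    (ha1 : 1 < a) (ha16 : a < 16) (hu1 : 1 < u) (hu4 : u < 4) (hv1 : 1 < v) (hv4 : v < 4)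
    (x₀ : ℝ) (hx₀ : x₀ ∈ Set.Ico (0:ℝ) 1) :
    Tendsto (fun P : ℕ => Hdisp c s L E I A A' G a u v x₀ P) atTop
      (nhds (2 * c * s * L *
        (10 * L ^ 2 / (3 * E * I * (16 - a)) -
          (20 * L ^ 2 / (3 * E * I * a)) * Cinf (a / 16) x₀ +
          (2 / (E * A * u)) * Cinf (u / 4) x₀ -
          1 / (E * A * (4 - u)) +
          1 / (G * A' * (4 - v)) -
          (2 / (G * A' * v)) * Cinf (v / 4) x₀))) := by
  have h1 := Sfun_tendsto x₀ (a/16) (by linarith) (by linarith)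
  have h2 := zero_tendsto x₀ (a/8) (by linarith) (by linarith)
  have h3 := Sfun_tendsto x₀ (u/4) (by linarith) (by linarith)
  have h4 := Sfun_tendsto x₀ (v/4) (by linarith) (by linarith)
  have H := (((h1.const_mul (20*c*s*L^3/(3*E*I*a))).sub
      (h2.const_mul (4*c*s*L^3/(E*I*a)))).sub
      (h3.const_mul (2*c*s*L/(E*A*u)))).add
      (h4.const_mul (2*c*s*L/(G*A'*v)))
  have H' := H.congr fun P =>
    (closed c s L E I A A' G a u v x₀ hE.ne' hI.ne' hA.ne' hA'.ne' hG.ne'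
      (by linarith) (by linarith) (by linarith) P).symm
  have hval : 2 * c * s * L *
        (10 * L ^ 2 / (3 * E * I * (16 - a)) -
          (20 * L ^ 2 / (3 * E * I * a)) * Cinf (a / 16) x₀ +
          (2 / (E * A * u)) * Cinf (u / 4) x₀ -
          1 / (E * A * (4 - u)) +
          1 / (G * A' * (4 - v)) -
          (2 / (G * A' * v)) * Cinf (v / 4) x₀) =
      (20*c*s*L^3/(3*E*I*a)) * ((a/16)/(1-a/16) - 2 * Cinf (a/16) x₀)
      - (4*c*s*L^3/(E*I*a)) * 0
      - (2*c*s*L/(E*A*u)) * ((u/4)/(1-u/4) - 2 * Cinf (u/4) x₀)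
      + (2*c*s*L/(G*A'*v)) * ((v/4)/(1-v/4) - 2 * Cinf (v/4) x₀) := by
    have n1 : (16:ℝ) - a ≠ 0 := by linarith
    have n2 : (4:ℝ) - u ≠ 0 := by linarith
    have n3 : (4:ℝ) - v ≠ 0 := by linarith
    have n4 : (1:ℝ) - a/16 ≠ 0 := by intro h; apply n1; linarith
    have n5 : (1:ℝ) - u/4 ≠ 0 := by intro h; apply n2; linarith
    have n6 : (1:ℝ) - v/4 ≠ 0 := by intro h; apply n3; linarith
    have na : a ≠ 0 := by linarith
    have nu : u ≠ 0 := by linarith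
    have nv : v ≠ 0 := by linarith
    field_simp
    ring
  rw [hval]
  exact H'
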